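/- Let n ≥ 1 and 1 ≤ k ≤ n. Suppose A : ℝ → M_n(ℝ) is a matrix-valued function differentiable at t₀ with derivative A′(t₀). Then the function t ↦ σ_k(A(t)) is differentiable at t₀ and its derivative equals tr(T_{k−1}(A(t₀)) · A′(t₀)). -/

import Mathlib

open Polynomial

/-- `σ_m(A)`: the coefficient of `t^m` in the polynomial `det (I + t A)`, i.e. the `m`-th
elementary symmetric function of the eigenvalues of `A`. -/
noncomputable def sigmaCoeff {n : ℕ} (A : Matrix (Fin n) (Fin n) ℝ) (m : ℕ) : ℝ :=
  ((1 + (Polynomial.X : Polynomial ℝ) • A.map Polynomial.C).det).coeff m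

/-- The `k`-th Newton transformation `T_k(A) = Σ_{j=0}^{k} (−1)^j σ_{k−j}(A) A^j`. -/
noncomputable def newtonT {n : ℕ} (A : Matrix (Fin n) (Fin n) ℝ) (k : ℕ) :
    Matrix (Fin n) (Fin n) ℝ :=
  ∑ j ∈ Finset.range (k + 1), ((-1 : ℝ) ^ j * sigmaCoeff A (k - j)) • A ^ j

section Aux

open Matrix

/-! ### The determinant as a continuous multilinear map of the rows, and Jacobi's formula -/

noncomputable def detCM (n : ℕ) : ContinuousMultilinearMap ℝ (fun _ : Fin n => (Fin n → ℝ)) ℝ :=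
  { toMultilinearMap := (Matrix.detRowAlternating (R := ℝ) (n := Fin n)).toMultilinearMap
    cont := by
      have h : Continuous fun M : Matrix (Fin n) (Fin n) ℝ => M.det := continuous_id.matrix_det
      exact h }

lemma det_updateRow_eq {n : ℕ} (M : Matrix (Fin n) (Fin n) ℝ) (i : Fin n) (b : Fin n → ℝ) :
    (M.updateRow i b).det = ∑ j, b j * Matrix.adjugate M j i := by
  have hb : b = ∑ j, b j • (Pi.single j 1 : Fin n → ℝ) := by
    funext x
    simp [Pi.single_apply, Finset.sum_ite_eq]
  rw [← cramer_transpose_apply]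
  conv_lhs => rw [hb]
  rw [map_sum, Finset.sum_apply]
  refine Finset.sum_congr rfl fun j _ => ?_
  rw [LinearMap.map_smul]
  simp only [Pi.smul_apply, smul_eq_mul]
  rw [cramer_transpose_apply, ← Matrix.adjugate_apply]

/-- Jacobi's formula for a differentiable matrix-valued curve. -/
lemma jacobi {n : ℕ} (B : ℝ → Matrix (Fin n) (Fin n) ℝ) (B' : Matrix (Fin n) (Fin n) ℝ)
    (t₀ : ℝ) (h : ∀ i j, HasDerivAt (fun t => B t i j) (B' i j) t₀) :
    HasDerivAt (fun t => (B t).det) ((Matrix.adjugate (B t₀) * B').trace) t₀ := by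
  have hcurve : HasDerivAt (fun t => (fun i j => B t i j : Fin n → Fin n → ℝ))
      (fun i j => B' i j) t₀ := hasDerivAt_pi.2 fun i => hasDerivAt_pi.2 (h i)
  have h1 := (detCM n).hasFDerivAt (x := (fun i j => B t₀ i j : Fin n → Fin n → ℝ))
  have h2 := h1.comp_hasDerivAt t₀ hcurve
  have h3 : ((detCM n).linearDeriv (fun i j => B t₀ i j)) (fun i j => B' i j)
      = (Matrix.adjugate (B t₀) * B').trace := by
    rw [ContinuousMultilinearMap.linearDeriv_apply]
    have hterm : ∀ i, detCM n (Function.update (fun i j => B t₀ i j) i (fun j => B' i j)) =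
        ((B t₀).updateRow i (B' i)).det := fun i => rfl
    simp only [hterm, det_updateRow_eq]
    rw [Matrix.trace, Finset.sum_comm]
    congr 1
    funext j
    simp [Matrix.diag, Matrix.mul_apply, mul_comm]
  rw [h3] at h2
  exact h2

/-! ### Algebraic identities for `sigmaCoeff` and `newtonT` -/

lemma det_poly_eq_charpolyRev {n : ℕ} (A : Matrix (Fin n) (Fin n) ℝ) :
    (1 + (Polynomial.X : Polynomial ℝ) • A.map Polynomial.C).det = Matrix.charpolyRev (-A) := by
  unfold Matrix.charpolyRev
  congr 1
  ext i j
  simp [sub_eq_add_neg]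

lemma sigmaCoeff_eq {n : ℕ} (A : Matrix (Fin n) (Fin n) ℝ) (m : ℕ) (hm : m ≤ n) :
    sigmaCoeff A m = (Matrix.charpoly (-A)).coeff (n - m) := by
  unfold sigmaCoeff
  rw [det_poly_eq_charpolyRev, ← Matrix.reverse_charpoly, Polynomial.coeff_reverse]
  congr 1
  rw [Matrix.charpoly_natDegree_eq_dim, Fintype.card_fin, Polynomial.revAt_le hm]

lemma sigmaCoeff_zero {n : ℕ} (A : Matrix (Fin n) (Fin n) ℝ) : sigmaCoeff A 0 = 1 := by
  unfold sigmaCoeff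
  rw [Polynomial.coeff_zero_eq_eval_zero, det_poly_eq_charpolyRev]
  exact Matrix.eval_charpolyRev (M := -A)

/-- Cayley–Hamilton: the `n`-th Newton transformation vanishes. -/
lemma newtonT_top {n : ℕ} (A : Matrix (Fin n) (Fin n) ℝ) : newtonT A n = 0 := by
  have hCH := Matrix.aeval_self_charpoly (-A)
  have hdeg : ((-A).charpoly).natDegree < n + 1 := by
    rw [Matrix.charpoly_natDegree_eq_dim, Fintype.card_fin]; omega
  rw [Polynomial.aeval_eq_sum_range' hdeg] at hCH
  unfold newtonT
  rw [← hCH]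
  refine Finset.sum_congr rfl fun j hj => ?_
  rw [Finset.mem_range] at hj
  rw [sigmaCoeff_eq A (n - j) (by omega)]
  have hnj : n - (n - j) = j := by omega
  rw [hnj]
  have hneg : (-A) ^ j = ((-1 : ℝ) ^ j) • A ^ j := by
    rw [← neg_one_smul ℝ A, _root_.smul_pow]
  rw [hneg, smul_smul, mul_comm]

lemma det_poly_natDegree_le {n : ℕ} (A : Matrix (Fin n) (Fin n) ℝ) :
    ((1 + (Polynomial.X : Polynomial ℝ) • A.map Polynomial.C).det).natDegree ≤ n := by
  rw [det_poly_eq_charpolyRev, ← Matrix.reverse_charpoly]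
  refine le_trans (Polynomial.reverse_natDegree_le _) ?_
  rw [Matrix.charpoly_natDegree_eq_dim, Fintype.card_fin]

lemma eval_det_poly {n : ℕ} (A : Matrix (Fin n) (Fin n) ℝ) (s : ℝ) :
    Polynomial.eval s ((1 + (Polynomial.X : Polynomial ℝ) • A.map Polynomial.C).det)
      = (1 + s • A).det := by
  rw [show Polynomial.eval s = ⇑(Polynomial.evalRingHom s) from rfl, RingHom.map_det]
  congr 1
  ext i j
  rw [RingHom.mapMatrix_apply]
  simp only [Matrix.map_apply, Matrix.add_apply, Matrix.smul_apply, smul_eq_mul,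
    Polynomial.coe_evalRingHom, Polynomial.eval_add, Polynomial.eval_mul, Polynomial.eval_X,
    Polynomial.eval_C]
  by_cases hij : i = j <;> simp [Matrix.one_apply, hij, mul_comm]

lemma det_one_add_smul_eq_sum {n : ℕ} (A : Matrix (Fin n) (Fin n) ℝ) (s : ℝ) :
    (1 + s • A).det = ∑ m ∈ Finset.range (n + 1), sigmaCoeff A m * s ^ m := by
  rw [← eval_det_poly,
    Polynomial.eval_eq_sum_range' (lt_of_le_of_lt (det_poly_natDegree_le A) (Nat.lt_succ_self n))]
  rfl

lemma newtonT_succ {n : ℕ} (A : Matrix (Fin n) (Fin n) ℝ) (m : ℕ) :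
    newtonT A (m + 1) = sigmaCoeff A (m + 1) • 1 - A * newtonT A m := by
  unfold newtonT
  rw [Finset.sum_range_succ']
  have h0 : ((-1 : ℝ) ^ 0 * sigmaCoeff A (m + 1 - 0)) • A ^ 0 = sigmaCoeff A (m + 1) • 1 := by
    simp
  rw [h0, Finset.mul_sum]
  have hterm : ∀ j, ((-1 : ℝ) ^ (j + 1) * sigmaCoeff A (m + 1 - (j + 1))) • A ^ (j + 1)
      = -(A * (((-1 : ℝ) ^ j * sigmaCoeff A (m - j)) • A ^ j)) := by
    intro j
    rw [mul_smul_comm, ← pow_succ' A, Nat.succ_sub_succ]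
    rw [pow_succ (-1 : ℝ), mul_comm ((-1 : ℝ) ^ j) (-1 : ℝ), mul_assoc, neg_one_mul, neg_smul]
  simp only [hterm]
  rw [Finset.sum_neg_distrib]
  abel

lemma key_identity {n : ℕ} (A : Matrix (Fin n) (Fin n) ℝ) (s : ℝ) (N : ℕ) :
    (1 + s • A) * (∑ m ∈ Finset.range N, s ^ m • newtonT A m) =
      (∑ m ∈ Finset.range (N + 1), sigmaCoeff A m * s ^ m) • (1 : Matrix (Fin n) (Fin n) ℝ)
        - s ^ N • newtonT A N := by
  induction N with
  | zero =>
    simp [newtonT, sigmaCoeff_zero]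
  | succ N ih =>
    rw [Finset.sum_range_succ, mul_add, ih, Finset.sum_range_succ _ (N + 1)]
    have h1 : (1 + s • A) * (s ^ N • newtonT A N)
        = s ^ N • newtonT A N + s ^ (N + 1) • (A * newtonT A N) := by
      rw [add_mul, one_mul, smul_mul_assoc, mul_smul_comm, smul_smul, ← pow_succ']
    rw [h1]
    have h2 : A * newtonT A N = sigmaCoeff A (N + 1) • 1 - newtonT A (N + 1) := by
      rw [newtonT_succ]; abel
    rw [h2, smul_sub, add_smul, smul_smul]
    rw [mul_comm (sigmaCoeff A (N + 1)) (s ^ (N + 1))]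
    abel

/-- The adjugate of `1 + s • A` expands in Newton transformations (at invertible points). -/
lemma adj_eq {n : ℕ} (A : Matrix (Fin n) (Fin n) ℝ) (s : ℝ) (h : IsUnit (1 + s • A).det) :
    Matrix.adjugate (1 + s • A) = ∑ m ∈ Finset.range n, s ^ m • newtonT A m := by
  have hk := key_identity A s n
  rw [newtonT_top, smul_zero, sub_zero, ← det_one_add_smul_eq_sum] at hk
  have h2 : (1 + s • A) * Matrix.adjugate (1 + s • A) = (1 + s • A).det • 1 :=
    Matrix.mul_adjugate _
  calc Matrix.adjugate (1 + s • A)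
      = (1 + s • A)⁻¹ * ((1 + s • A) * Matrix.adjugate (1 + s • A)) := by
        rw [← mul_assoc, Matrix.nonsing_inv_mul _ h, one_mul]
    _ = (1 + s • A)⁻¹ * ((1 + s • A) * ∑ m ∈ Finset.range n, s ^ m • newtonT A m) := by
        rw [h2, hk]
    _ = ∑ m ∈ Finset.range n, s ^ m • newtonT A m := by
        rw [← mul_assoc, Matrix.nonsing_inv_mul _ h, one_mul]

lemma trace_formula {n : ℕ} (A₀ A' : Matrix (Fin n) (Fin n) ℝ) (s : ℝ)
    (h : IsUnit (1 + s • A₀).det) :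
    (Matrix.adjugate (1 + s • A₀) * (s • A')).trace
      = ∑ m ∈ Finset.range (n + 1),
          s ^ m * (if m = 0 then 0 else (newtonT A₀ (m - 1) * A').trace) := by
  have hrhs : ∑ m ∈ Finset.range (n + 1),
        s ^ m * (if m = 0 then 0 else (newtonT A₀ (m - 1) * A').trace)
      = ∑ m ∈ Finset.range n, s ^ (m + 1) * (newtonT A₀ m * A').trace := by
    rw [Finset.sum_range_succ'
      (fun m => s ^ m * (if m = 0 then 0 else (newtonT A₀ (m - 1) * A').trace)) n]
    simp
  rw [hrhs, adj_eq A₀ s h, Finset.sum_mul, Matrix.trace_sum]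
  refine Finset.sum_congr rfl fun m _ => ?_
  rw [Matrix.smul_mul, Matrix.mul_smul, Matrix.trace_smul, Matrix.trace_smul,
    smul_eq_mul, smul_eq_mul, ← mul_assoc, ← pow_succ]

end Aux

/-- If `A : ℝ → M_n(ℝ)` is (entrywise) differentiable at `t₀` with
derivative `A'`, then `t ↦ σ_k(A t)` is differentiable at `t₀` with derivative
`tr (T_{k−1}(A t₀) · A')`. -/
theorem hasDerivAt_sigma (n : ℕ) (hn : 1 ≤ n) (k : ℕ) (hk1 : 1 ≤ k) (hk2 : k ≤ n)
    (A : ℝ → Matrix (Fin n) (Fin n) ℝ) (A' : Matrix (Fin n) (Fin n) ℝ) (t₀ : ℝ)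
    (hA : ∀ i j, HasDerivAt (fun t => A t i j) (A' i j) t₀) :
    HasDerivAt (fun t => sigmaCoeff (A t) k)
      ((newtonT (A t₀) (k - 1) * A').trace) t₀ := by
  classical
  set A₀ := A t₀ with hA₀def
  -- the polynomial `det (1 + X A₀)` is nonzero
  set q : Polynomial ℝ := (1 + (Polynomial.X : Polynomial ℝ) • A₀.map Polynomial.C).det with hqdef
  have hq0 : q ≠ 0 := by
    intro h
    have h1 : q.coeff 0 = 1 := sigmaCoeff_zero A₀
    rw [h] at h1
    simpa using h1
  -- choose `n+1` distinct nodes where `1 + s • A₀` is invertible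
  have hfin : {x : ℝ | q.IsRoot x}.Finite := Polynomial.finite_setOf_isRoot hq0
  have hinf : {x : ℝ | q.IsRoot x}ᶜ.Infinite := hfin.infinite_compl
  obtain ⟨T, hTsub, hTcard⟩ := hinf.exists_subset_card_eq (n + 1)
  let sν : Fin (n + 1) → ℝ := fun i => (T.equivFin.symm ((finCongr hTcard.symm) i) : ℝ)
  have hsinj : Function.Injective sν :=
    Subtype.coe_injective.comp (T.equivFin.symm.injective.comp (finCongr hTcard.symm).injective)
  have hunit : ∀ i, IsUnit (1 + sν i • A₀).det := by
    intro i
    have hmem : sν i ∈ {x : ℝ | q.IsRoot x}ᶜ := hTsub (T.equivFin.symm _).2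
    rw [isUnit_iff_ne_zero, ← eval_det_poly]
    exact hmem
  set V : Matrix (Fin (n + 1)) (Fin (n + 1)) ℝ := Matrix.vandermonde sν with hVdef
  have hV : IsUnit V.det := isUnit_iff_ne_zero.2 (Matrix.det_vandermonde_ne_zero_iff.2 hsinj)
  -- the weight vector
  let wn : ℕ → ℝ := fun m => if m = 0 then 0 else (newtonT A₀ (m - 1) * A').trace
  let w : Fin (n + 1) → ℝ := fun m => wn (m : ℕ)
  -- Step A: derivative of each node function
  have stepA : ∀ i, HasDerivAt (fun t => (1 + sν i • A t).det) ((V.mulVec w) i) t₀ := by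
    intro i
    have hB : ∀ a b, HasDerivAt (fun t => (1 + sν i • A t) a b) ((sν i • A') a b) t₀ := by
      intro a b
      have h1 := ((hA a b).const_mul (sν i)).const_add ((1 : Matrix (Fin n) (Fin n) ℝ) a b)
      have heq : ∀ t, (1 + sν i • A t) a b
          = (1 : Matrix (Fin n) (Fin n) ℝ) a b + sν i * A t a b := fun t => by
        simp [Matrix.add_apply, Matrix.smul_apply, smul_eq_mul]
      have hval : (sν i • A') a b = sν i * A' a b := by
        simp [Matrix.smul_apply, smul_eq_mul]
      simp only [heq, hval]
      exact h1
    have hJ := jacobi (fun t => 1 + sν i • A t) (sν i • A') t₀ hB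
    have hval : (Matrix.adjugate (1 + sν i • A₀) * (sν i • A')).trace = (V.mulVec w) i := by
      rw [trace_formula A₀ A' (sν i) (hunit i)]
      rw [Matrix.mulVec, dotProduct]
      rw [← Fin.sum_univ_eq_sum_range (fun m => sν i ^ m * wn m) (n + 1)]
      refine Finset.sum_congr rfl fun m _ => ?_
      simp only [hVdef, Matrix.vandermonde_apply, w]
    rw [hval] at hJ
    exact hJ
  -- Step B: representation of `σ_k (A t)` via the node functions
  set κ : Fin (n + 1) := ⟨k, by omega⟩ with hκdef
  have hrep : ∀ t, sigmaCoeff (A t) k = ∑ i, (V⁻¹) κ i * (1 + sν i • A t).det := by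
    intro t
    have hvec : V.mulVec (fun m : Fin (n + 1) => sigmaCoeff (A t) (m : ℕ))
        = fun i => (1 + sν i • A t).det := by
      funext i
      rw [det_one_add_smul_eq_sum, Matrix.mulVec, dotProduct]
      rw [← Fin.sum_univ_eq_sum_range (fun m => sigmaCoeff (A t) m * sν i ^ m) (n + 1)]
      refine Finset.sum_congr rfl fun m _ => ?_
      simp only [hVdef, Matrix.vandermonde_apply]
      ring
    have h2 := congrArg (fun v => V⁻¹.mulVec v) hvec
    beta_reduce at h2
    rw [Matrix.mulVec_mulVec, Matrix.nonsing_inv_mul V hV, Matrix.one_mulVec] at h2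
    have h3 := congrFun h2 κ
    beta_reduce at h3
    rw [h3, Matrix.mulVec, dotProduct]
  -- Step C: conclude
  have hsum : HasDerivAt (fun t => ∑ i, (V⁻¹) κ i * (1 + sν i • A t).det)
      (∑ i, (V⁻¹) κ i * (V.mulVec w) i) t₀ :=
    HasDerivAt.fun_sum fun i _ => (stepA i).const_mul _
  have hval : ∑ i, (V⁻¹) κ i * (V.mulVec w) i = (newtonT A₀ (k - 1) * A').trace := by
    have h1 : ∑ i, (V⁻¹) κ i * (V.mulVec w) i = (V⁻¹.mulVec (V.mulVec w)) κ := by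
      rw [Matrix.mulVec, dotProduct]
    rw [h1, Matrix.mulVec_mulVec, Matrix.nonsing_inv_mul V hV, Matrix.one_mulVec]
    have hk0 : (κ : ℕ) ≠ 0 := by simp [hκdef]; omega
    simp only [w, wn, if_neg hk0]
    rfl
  have hfun : (fun t => sigmaCoeff (A t) k) = fun t => ∑ i, (V⁻¹) κ i * (1 + sν i • A t).det :=
    funext hrep
  rw [hfun, ← hval]
  exact hsum
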